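/- Let 0 < α < β ≤ 1 and y ∈ C^{0,β}[0,T]. Then for every grid point t_n = nτ ∈ (0,T], the L1 approximation satisfies |D^α y(t_n) − δ^α_τ y(t_n)| ≤ C·[y]_{C^{0,β}[0,t_n]}·τ^{β-α}, where C = (1-n^{-α})/(2^β Γ(1-α)) + α/(Γ(1-α)(β-α)(1+β-α)) + α·Γ(1+β)/Γ(2+β-α). -/

import Mathlib

open Real Set

open MeasureTheory intervalIntegral

/-- The piecewise linear interpolant of `y` on the uniform grid `t_j = j τ`. -/
noncomputable def linInterp (τ : ℝ) (y : ℝ → ℝ) (t : ℝ) : ℝ :=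
  (t - (⌊t / τ⌋ : ℝ) * τ) / τ * y (((⌊t / τ⌋ : ℝ) + 1) * τ)
    + (((⌊t / τ⌋ : ℝ) + 1) * τ - t) / τ * y ((⌊t / τ⌋ : ℝ) * τ)

/-- The Caputo derivative of order `α` (in the non-local difference form). -/
noncomputable def caputo (α : ℝ) (y : ℝ → ℝ) (t : ℝ) : ℝ :=
  (1 / Real.Gamma (1 - α)) * (y t - y 0) / t ^ α
    + (α / Real.Gamma (1 - α)) * ∫ s in (0:ℝ)..t, (y t - y s) / (t - s) ^ (1 + α)

lemma jensen2 {β w x u : ℝ} (hβ0 : 0 < β) (hβ : β ≤ 1) (hw : 0 ≤ w) (hw1 : w ≤ 1)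
    (hx : 0 ≤ x) (hu : 0 ≤ u) :
    w * x ^ β + (1-w) * u ^ β ≤ (w * x + (1-w) * u) ^ β := by
  have hc := Real.concaveOn_rpow hβ0.le hβ
  have h := hc.2 (mem_Ici.mpr hx) (mem_Ici.mpr hu) (show (0:ℝ) ≤ w from hw)
    (show (0:ℝ) ≤ 1 - w by linarith) (show w + (1 - w) = 1 by ring)
  simpa [smul_eq_mul] using h

lemma linInterp_nat {τ : ℝ} (hτ : 0 < τ) (y : ℝ → ℝ) (k : ℕ) :
    linInterp τ y ((k:ℝ) * τ) = y ((k:ℝ) * τ) := by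
  have h : ((k:ℝ) * τ) / τ = (k:ℝ) := by field_simp
  have h2 : ⌊((k:ℝ) * τ) / τ⌋ = (k:ℤ) := by rw [h]; exact_mod_cast Int.floor_natCast k
  simp only [linInterp, h2]
  push_cast
  field_simp
  ring

lemma holder_continuousOn {y : ℝ → ℝ} {H β A B : ℝ} (hβ0 : 0 < β) (hH : 0 ≤ H)
    (hHolder : ∀ s ∈ Icc A B, ∀ u ∈ Icc A B, |y u - y s| ≤ H * |u - s| ^ β) :
    ContinuousOn y (Icc A B) := by
  intro s hs
  rw [Metric.continuousWithinAt_iff]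
  intro ε hε
  refine ⟨(ε / (H + 1)) ^ β⁻¹, by positivity, fun x hx hd => ?_⟩
  rw [Real.dist_eq]
  calc |y x - y s| ≤ H * |x - s| ^ β := hHolder s hs x hx
    _ ≤ H * ((ε / (H+1)) ^ β⁻¹) ^ β := by
        refine mul_le_mul_of_nonneg_left ?_ hH
        refine Real.rpow_le_rpow (abs_nonneg _) ?_ hβ0.le
        rw [Real.dist_eq] at hd; exact hd.le
    _ = H * (ε / (H+1)) := by rw [Real.rpow_inv_rpow (by positivity) hβ0.ne']
    _ < ε := by
        rw [mul_div_assoc']  -- H * ε / (H+1)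
        rw [div_lt_iff₀ (by positivity)]
        nlinarith

lemma interp_core {y : ℝ → ℝ} {H β τ s : ℝ} {j : ℤ} (hτ : 0 < τ) (hβ0 : 0 < β) (hH : 0 ≤ H)
    (hj : ⌊s/τ⌋ = j) (hp : (j:ℝ) * τ ≤ s) (hq : s ≤ ((j:ℝ)+1) * τ)
    (h1 : |y (((j:ℝ)+1)*τ) - y s| ≤ H * ((((j:ℝ)+1)*τ - s)) ^ β)
    (h2 : |y ((j:ℝ)*τ) - y s| ≤ H * ((s - (j:ℝ)*τ)) ^ β) :
    |linInterp τ y s - y s|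
      ≤ H * ((s - (j:ℝ)*τ)/τ * ((((j:ℝ)+1)*τ - s)) ^ β
          + ((((j:ℝ)+1)*τ - s))/τ * ((s - (j:ℝ)*τ)) ^ β) := by
  have key : linInterp τ y s - y s
      = (s - (j:ℝ)*τ)/τ * (y (((j:ℝ)+1)*τ) - y s)
        + ((((j:ℝ)+1)*τ - s))/τ * (y ((j:ℝ)*τ) - y s) := by
    simp only [linInterp, hj]
    field_simp
    ring
  rw [key]
  have hw0 : 0 ≤ (s - (j:ℝ)*τ)/τ := div_nonneg (by linarith) hτ.le
  have hw0' : 0 ≤ ((((j:ℝ)+1)*τ - s))/τ := div_nonneg (by linarith) hτ.le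
  calc |(s - (j:ℝ)*τ)/τ * (y (((j:ℝ)+1)*τ) - y s) + ((((j:ℝ)+1)*τ - s))/τ * (y ((j:ℝ)*τ) - y s)|
      ≤ |(s - (j:ℝ)*τ)/τ * (y (((j:ℝ)+1)*τ) - y s)| + |((((j:ℝ)+1)*τ - s))/τ * (y ((j:ℝ)*τ) - y s)| :=
        abs_add_le _ _
    _ = (s - (j:ℝ)*τ)/τ * |y (((j:ℝ)+1)*τ) - y s| + ((((j:ℝ)+1)*τ - s))/τ * |y ((j:ℝ)*τ) - y s| := by
        rw [abs_mul, abs_mul, abs_of_nonneg hw0, abs_of_nonneg hw0']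
    _ ≤ (s - (j:ℝ)*τ)/τ * (H * ((((j:ℝ)+1)*τ - s)) ^ β)
        + ((((j:ℝ)+1)*τ - s))/τ * (H * ((s - (j:ℝ)*τ)) ^ β) := by
        exact add_le_add (mul_le_mul_of_nonneg_left h1 hw0) (mul_le_mul_of_nonneg_left h2 hw0')
    _ = H * ((s - (j:ℝ)*τ)/τ * ((((j:ℝ)+1)*τ - s)) ^ β
          + ((((j:ℝ)+1)*τ - s))/τ * ((s - (j:ℝ)*τ)) ^ β) := by ring
lemma linInterp_measurable (τ : ℝ) (y : ℝ → ℝ) : Measurable (linInterp τ y) := by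
  have hfl : Measurable fun s : ℝ => ⌊s / τ⌋ := (measurable_id.div_const τ).floor
  have h1 : Measurable fun s : ℝ => y ((((⌊s / τ⌋ : ℤ) : ℝ)) * τ) :=
    (measurable_from_top (f := fun k : ℤ => y ((k:ℝ) * τ))).comp hfl
  have h2 : Measurable fun s : ℝ => y (((((⌊s / τ⌋ : ℤ) : ℝ)) + 1) * τ) :=
    (measurable_from_top (f := fun k : ℤ => y (((k:ℝ) + 1) * τ))).comp hfl
  have h3 : Measurable fun s : ℝ => ((⌊s / τ⌋ : ℤ) : ℝ) :=
    (measurable_from_top (f := fun k : ℤ => (k : ℝ))).comp hfl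
  unfold linInterp
  exact (((measurable_id.sub (h3.mul_const τ)).div_const τ).mul h2).add
    (((((h3.add_const 1).mul_const τ).sub measurable_id).div_const τ).mul h1)

lemma integrable_of_bound' {a b : ℝ} (hab : a ≤ b) {F G : ℝ → ℝ}
    (hF : AEStronglyMeasurable F (volume.restrict (Ioo a b)))
    (hG : IntervalIntegrable G volume a b)
    (hbd : ∀ s ∈ Ioo a b, |F s| ≤ G s) : IntervalIntegrable F volume a b := by
  rw [intervalIntegrable_iff_integrableOn_Ioo_of_le hab] at hG ⊢
  refine Integrable.mono hG hF ?_
  refine (ae_restrict_iff' measurableSet_Ioo).mpr (Filter.Eventually.of_forall fun s hs => ?_)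
  have := hbd s hs
  rw [Real.norm_eq_abs, Real.norm_eq_abs]
  exact this.trans (le_abs_self _)
lemma beta_aux_eq {a b x : ℝ} (hx : 0 ≤ x) (hx1 : x ≤ 1) :
    ((x:ℂ) ^ ((a:ℂ)-1) * ((1:ℂ)-(x:ℂ)) ^ ((b:ℂ)-1)) = ((x ^ (a-1) * (1-x) ^ (b-1) : ℝ) : ℂ) := by
  have h1 : ((a:ℂ)-1) = ((a-1 : ℝ) : ℂ) := by push_cast; ring
  have h2 : ((b:ℂ)-1) = ((b-1 : ℝ) : ℂ) := by push_cast; ring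
  have h3 : ((1:ℂ)-(x:ℂ)) = ((1-x : ℝ) : ℂ) := by push_cast; ring
  rw [h1, h2, h3, ← Complex.ofReal_cpow hx, ← Complex.ofReal_cpow (by linarith), ← Complex.ofReal_mul]

lemma realBeta_integrable {a b : ℝ} (ha : 0 < a) (hb : 0 < b) :
    IntervalIntegrable (fun x : ℝ => x ^ (a-1) * (1-x) ^ (b-1)) volume 0 1 := by
  have h := Complex.betaIntegral_convergent (u := (a:ℂ)) (v := (b:ℂ)) (by simpa) (by simpa)
  rw [intervalIntegrable_iff_integrableOn_Ioc_of_le zero_le_one] at h ⊢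
  refine (h.re).congr ?_
  refine (ae_restrict_iff' measurableSet_Ioc).mpr (Filter.Eventually.of_forall fun x hx => ?_)
  simp only [RCLike.re_to_complex]
  rw [beta_aux_eq hx.1.le hx.2, Complex.ofReal_re]

lemma realBeta_value {a b : ℝ} (ha : 0 < a) (hb : 0 < b) :
    ∫ x in (0:ℝ)..1, x ^ (a-1) * (1-x) ^ (b-1) = Gamma a * Gamma b / Gamma (a+b) := by
  have h := Complex.Gamma_mul_Gamma_eq_betaIntegral (s := (a:ℂ)) (t := (b:ℂ)) (by simpa) (by simpa)
  have hint : Complex.betaIntegral (a:ℂ) (b:ℂ)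
      = ((∫ x in (0:ℝ)..1, x ^ (a-1) * (1-x) ^ (b-1) : ℝ) : ℂ) := by
    rw [Complex.betaIntegral, ← intervalIntegral.integral_ofReal]
    refine intervalIntegral.integral_congr fun x hx => ?_
    rw [uIcc_of_le zero_le_one] at hx
    exact beta_aux_eq hx.1 hx.2
  rw [hint, Complex.Gamma_ofReal, Complex.Gamma_ofReal, ← Complex.ofReal_add a b,
    Complex.Gamma_ofReal, ← Complex.ofReal_mul, ← Complex.ofReal_mul] at h
  have := Complex.ofReal_inj.mp h
  have hG : Gamma (a+b) ≠ 0 := (Gamma_pos_of_pos (by linarith)).ne'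
  field_simp [this]
  rw [this]; ring

lemma realBeta_scaled_eqOn {a b τ : ℝ} (hτ : 0 < τ) {u : ℝ} (hu : 0 ≤ u) (huτ : u ≤ τ) :
    u ^ (a-1) * (τ-u) ^ (b-1)
      = τ ^ (a+b-2) * ((u * τ⁻¹) ^ (a-1) * (1 - u * τ⁻¹) ^ (b-1)) := by
  have h1 : (1 : ℝ) - u * τ⁻¹ = (τ - u) * τ⁻¹ := by field_simp
  rw [h1, Real.mul_rpow hu (by positivity), Real.mul_rpow (by linarith) (by positivity),
    Real.inv_rpow hτ.le, Real.inv_rpow hτ.le, ← Real.rpow_neg hτ.le, ← Real.rpow_neg hτ.le]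
  rw [show τ ^ (a+b-2) * (u ^ (a-1) * τ ^ (-(a-1)) * ((τ-u) ^ (b-1) * τ ^ (-(b-1))))
      = (τ ^ (a+b-2) * τ ^ (-(a-1)) * τ ^ (-(b-1))) * (u ^ (a-1) * (τ-u) ^ (b-1)) by ring,
    ← Real.rpow_add hτ, ← Real.rpow_add hτ]
  rw [show a+b-2 + -(a-1) + -(b-1) = 0 by ring, Real.rpow_zero, one_mul]

lemma realBeta_scaled_integrable {a b τ : ℝ} (ha : 0 < a) (hb : 0 < b) (hτ : 0 < τ) :
    IntervalIntegrable (fun u : ℝ => u ^ (a-1) * (τ-u) ^ (b-1)) volume 0 τ := by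
  have h := ((realBeta_integrable ha hb).comp_mul_right (c := τ⁻¹)).const_mul (τ ^ (a+b-2))
  rw [zero_div, one_div, inv_inv] at h
  rw [intervalIntegrable_iff_integrableOn_Ioc_of_le hτ.le] at h ⊢
  refine h.congr ?_
  refine (ae_restrict_iff' measurableSet_Ioc).mpr (Filter.Eventually.of_forall fun u hu => ?_)
  exact (realBeta_scaled_eqOn hτ hu.1.le hu.2).symm

lemma realBeta_scaled_value {a b τ : ℝ} (ha : 0 < a) (hb : 0 < b) (hτ : 0 < τ) :
    ∫ u in (0:ℝ)..τ, u ^ (a-1) * (τ-u) ^ (b-1)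
      = τ ^ (a+b-1) * (Gamma a * Gamma b / Gamma (a+b)) := by
  have h1 : ∫ u in (0:ℝ)..τ, u ^ (a-1) * (τ-u) ^ (b-1)
      = ∫ u in (0:ℝ)..τ, τ ^ (a+b-2) * ((u * τ⁻¹) ^ (a-1) * (1 - u * τ⁻¹) ^ (b-1)) := by
    refine intervalIntegral.integral_congr fun u hu => ?_
    rw [uIcc_of_le hτ.le] at hu
    exact realBeta_scaled_eqOn hτ hu.1 hu.2
  rw [h1, intervalIntegral.integral_const_mul,
    intervalIntegral.integral_comp_mul_right (fun x => x ^ (a-1) * (1-x) ^ (b-1))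
      (inv_ne_zero hτ.ne'),
    zero_mul, mul_inv_cancel₀ hτ.ne', realBeta_value ha hb, inv_inv, smul_eq_mul]
  rw [show τ ^ (a+b-2) * (τ * (Gamma a * Gamma b / Gamma (a+b)))
      = (τ ^ (a+b-2) * τ ^ (1:ℝ)) * (Gamma a * Gamma b / Gamma (a+b)) by
        rw [Real.rpow_one]; ring, ← Real.rpow_add hτ]
  ring_nf
lemma interp_bound_mid {y : ℝ → ℝ} {H β τ : ℝ} {n : ℕ} (hH : 0 ≤ H) (hβ0 : 0 < β) (hβ : β ≤ 1)
    (hτ : 0 < τ)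
    (hHolder : ∀ s ∈ Icc (0:ℝ) ((n:ℝ)*τ), ∀ u ∈ Icc (0:ℝ) ((n:ℝ)*τ),
        |y u - y s| ≤ H * |u - s| ^ β)
    {s : ℝ} (hs0 : 0 < s) (hs : s ≤ (n:ℝ)*τ - τ) :
    |linInterp τ y s - y s| ≤ H * (τ/2) ^ β := by
  set j := ⌊s/τ⌋ with hjdef
  have hp : (j:ℝ)*τ ≤ s := by
    have h := Int.floor_le (s/τ)
    calc (j:ℝ)*τ ≤ (s/τ)*τ := by nlinarith
      _ = s := by field_simp
  have hq : s ≤ ((j:ℝ)+1)*τ := by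
    have h := (Int.lt_floor_add_one (s/τ)).le
    calc s = (s/τ)*τ := by field_simp
      _ ≤ ((j:ℝ)+1)*τ := by nlinarith
  have hj0 : (0:ℝ) ≤ (j:ℝ) := by exact_mod_cast Int.floor_nonneg.mpr (by positivity)
  have hjn : (j:ℝ)+1 ≤ (n:ℝ) := by
    have h1 : (j:ℝ) ≤ s/τ := Int.floor_le _
    have h2 : s/τ ≤ (n:ℝ)-1 := by rw [div_le_iff₀ hτ]; nlinarith
    linarith
  have hsmem : s ∈ Icc (0:ℝ) ((n:ℝ)*τ) := ⟨hs0.le, by nlinarith⟩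
  have hqmem : ((j:ℝ)+1)*τ ∈ Icc (0:ℝ) ((n:ℝ)*τ) := ⟨by nlinarith, by nlinarith⟩
  have hpmem : (j:ℝ)*τ ∈ Icc (0:ℝ) ((n:ℝ)*τ) := ⟨by nlinarith, by nlinarith⟩
  have h1 : |y (((j:ℝ)+1)*τ) - y s| ≤ H * ((((j:ℝ)+1)*τ - s)) ^ β := by
    have h := hHolder s hsmem (((j:ℝ)+1)*τ) hqmem
    have e1 : |((j:ℝ)+1)*τ - s| = ((j:ℝ)+1)*τ - s := abs_of_nonneg (by linarith)
    rwa [e1] at h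
  have h2 : |y ((j:ℝ)*τ) - y s| ≤ H * ((s - (j:ℝ)*τ)) ^ β := by
    have h := hHolder s hsmem ((j:ℝ)*τ) hpmem
    have e2 : |(j:ℝ)*τ - s| = s - (j:ℝ)*τ := by rw [abs_sub_comm]; exact abs_of_nonneg (by linarith)
    rwa [e2] at h
  refine (interp_core hτ hβ0 hH hjdef.symm hp hq h1 h2).trans ?_
  refine mul_le_mul_of_nonneg_left ?_ hH
  set A := ((j:ℝ)+1)*τ - s with hA
  set B := s - (j:ℝ)*τ with hB
  have hA0 : 0 ≤ A := by simp [hA]; linarith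
  have hB0 : 0 ≤ B := by simp [hB]; linarith
  have hAB : A + B = τ := by simp [hA, hB]; ring
  have hwA : A/τ = 1 - B/τ := by field_simp; linarith
  have hj2 : B/τ * A ^ β + A/τ * B ^ β ≤ (B/τ * A + (1 - B/τ) * B) ^ β := by
    rw [hwA]
    exact jensen2 hβ0 hβ (div_nonneg hB0 hτ.le) (by rw [div_le_one hτ]; linarith) hA0 hB0
  refine hj2.trans ?_
  have hval : B/τ * A + (1 - B/τ) * B = 2*A*B/τ := by
    field_simp
    linear_combination B * hAB
  rw [hval]
  refine Real.rpow_le_rpow (by positivity) ?_ hβ0.le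
  rw [div_le_div_iff₀ hτ (by norm_num : (0:ℝ) < 2)]
  nlinarith [sq_nonneg (A - B)]

lemma interp_bound_last {y : ℝ → ℝ} {H β τ : ℝ} {n : ℕ} (hH : 0 ≤ H) (hβ0 : 0 < β) (hβ : β ≤ 1)
    (hτ : 0 < τ) (hn : 1 ≤ n)
    (hHolder : ∀ s ∈ Icc (0:ℝ) ((n:ℝ)*τ), ∀ u ∈ Icc (0:ℝ) ((n:ℝ)*τ),
        |y u - y s| ≤ H * |u - s| ^ β)
    {s : ℝ} (hs1 : (n:ℝ)*τ - τ < s) (hs2 : s < (n:ℝ)*τ) :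
    |linInterp τ y s - y s|
      ≤ H * ((s - ((n:ℝ)*τ - τ))/τ * ((n:ℝ)*τ - s) ^ β
          + ((n:ℝ)*τ - s)/τ * (s - ((n:ℝ)*τ - τ)) ^ β) := by
  have hn1 : (1:ℝ) ≤ (n:ℝ) := by exact_mod_cast hn
  have hj : ⌊s/τ⌋ = (n:ℤ) - 1 := by
    rw [Int.floor_eq_iff]
    constructor
    · push_cast
      rw [le_div_iff₀ hτ]; linarith
    · push_cast
      rw [div_lt_iff₀ hτ]; linarith
  have hcast : (((n:ℤ) - 1 : ℤ) : ℝ) = (n:ℝ) - 1 := by push_cast; ring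
  have hp : ((((n:ℤ) - 1 : ℤ)):ℝ)*τ ≤ s := by rw [hcast]; nlinarith
  have hq : s ≤ (((((n:ℤ) - 1 : ℤ)):ℝ)+1)*τ := by rw [hcast]; nlinarith
  have hsmem : s ∈ Icc (0:ℝ) ((n:ℝ)*τ) := ⟨by nlinarith, hs2.le⟩
  have hqmem : ((((((n:ℤ) - 1 : ℤ)):ℝ))+1)*τ ∈ Icc (0:ℝ) ((n:ℝ)*τ) := by
    rw [hcast]; constructor <;> nlinarith
  have hpmem : ((((n:ℤ) - 1 : ℤ)):ℝ)*τ ∈ Icc (0:ℝ) ((n:ℝ)*τ) := by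
    rw [hcast]; constructor <;> nlinarith
  have h1 : |y ((((((n:ℤ) - 1 : ℤ)):ℝ)+1)*τ) - y s|
      ≤ H * (((((((n:ℤ) - 1 : ℤ)):ℝ)+1)*τ - s)) ^ β := by
    have h := hHolder s hsmem _ hqmem
    have e1 : |(((((n:ℤ) - 1 : ℤ)):ℝ)+1)*τ - s| = (((((n:ℤ) - 1 : ℤ)):ℝ)+1)*τ - s := by
      rw [hcast]; exact abs_of_nonneg (by linarith)
    rwa [e1] at h
  have h2 : |y (((((n:ℤ) - 1 : ℤ)):ℝ)*τ) - y s| ≤ H * ((s - ((((n:ℤ) - 1 : ℤ)):ℝ)*τ)) ^ β := by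
    have h := hHolder s hsmem _ hpmem
    have e2 : |((((n:ℤ) - 1 : ℤ)):ℝ)*τ - s| = s - ((((n:ℤ) - 1 : ℤ)):ℝ)*τ := by
      rw [abs_sub_comm, hcast]; exact abs_of_nonneg (by linarith)
    rwa [e2] at h
  have hcore := interp_core hτ hβ0 hH hj hp hq h1 h2
  have he1 : ((((((n:ℤ) - 1 : ℤ)):ℝ))+1)*τ = (n:ℝ)*τ := by rw [hcast]; ring
  have he2 : ((((n:ℤ) - 1 : ℤ)):ℝ)*τ = (n:ℝ)*τ - τ := by rw [hcast]; ring
  rw [he1, he2] at hcore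
  exact hcore

lemma final_algebra {α β H τ R B Q N tw G1 Gb G3 G4 : ℝ}
    (hα : α ≠ 0) (hτ : τ ≠ 0) (hG1 : G1 ≠ 0) (hGb : Gb ≠ 0) (hG4 : G4 ≠ 0)
    (htw : tw ≠ 0) (hβα : β - α ≠ 0) (hβα1 : (β-α)+1 ≠ 0) (h1βα : 1 + β - α ≠ 0)
    (hBQ : B * Q = R) :
    (α / G1) * (H * (B / tw) * ((Q - N * Q)/α)
      + (H/τ * ((τ * R) * (1 * Gb / (((β-α)+1)*((β-α)*Gb))))
        + H/τ * ((τ * R) * (G3 * G1 / G4))))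
    = ((1 - N) / (tw * G1) + α / (G1 * (β - α) * (1 + β - α)) + α * G3 / G4) * H * R := by
  subst hBQ
  field_simp
  ring


/-- L1 truncation error for β-Hölder functions, with explicit constant. -/
theorem L1_truncation_holder
    (T α β H τ : ℝ) (y : ℝ → ℝ) (n : ℕ)
    (hα : 0 < α) (hαβ : α < β) (hβ : β ≤ 1) (hτ : 0 < τ) (hH : 0 ≤ H)
    (hn : 1 ≤ n) (hT : (n : ℝ) * τ ≤ T)
    (hHolder : ∀ s ∈ Icc (0:ℝ) ((n : ℝ) * τ), ∀ t ∈ Icc (0:ℝ) ((n : ℝ) * τ),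
        |y t - y s| ≤ H * |t - s| ^ β) :
    |caputo α y ((n : ℝ) * τ) - caputo α (linInterp τ y) ((n : ℝ) * τ)|
      ≤ ((1 - (n : ℝ) ^ (-α)) / (2 ^ β * Real.Gamma (1 - α))
          + α / (Real.Gamma (1 - α) * (β - α) * (1 + β - α))
          + α * Real.Gamma (1 + β) / Real.Gamma (2 + β - α))
        * H * τ ^ (β - α) := by
  have hβ0 : 0 < β := lt_trans hα hαβ
  have hα1 : α < 1 := lt_of_lt_of_le hαβ hβ
  have hn1 : (1:ℝ) ≤ (n:ℝ) := by exact_mod_cast hn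
  set t : ℝ := (n:ℝ) * τ with ht
  have htτ : τ ≤ t := by nlinarith
  have ht0 : 0 < t := by nlinarith
  set t' : ℝ := t - τ with ht'
  have ht'0 : 0 ≤ t' := by rw [ht']; linarith
  have ht't : t' ≤ t := by rw [ht']; linarith
  have hG : 0 < Real.Gamma (1 - α) := Real.Gamma_pos_of_pos (by linarith)
  have hy0 : linInterp τ y 0 = y 0 := by
    have h := linInterp_nat hτ y 0; simpa using h
  have hyt : linInterp τ y t = y t := linInterp_nat hτ y n
  set g : ℝ → ℝ := fun s => (linInterp τ y s - y s) / (t - s) ^ (1 + α) with hgdef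
  set f1 : ℝ → ℝ := fun s => (y t - y s) / (t - s) ^ (1 + α) with hf1def
  -- continuity of y on [0,t]
  have hycont : ContinuousOn y (Icc 0 t) := holder_continuousOn hβ0 hH hHolder
  have hdc : Continuous fun s : ℝ => (t - s) ^ (1 + α) :=
    (continuous_const.sub continuous_id).rpow_const fun s => Or.inr (by linarith)
  -- integrability of f1
  have hf1cont : ContinuousOn f1 (Ioo 0 t) := by
    refine ContinuousOn.div (continuousOn_const.sub (hycont.mono Ioo_subset_Icc_self))
      hdc.continuousOn fun s hs => (Real.rpow_pos_of_pos (by linarith [hs.2]) _).ne'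
  have hf1bd : ∀ s ∈ Ioo 0 t, |f1 s| ≤ H * (t - s) ^ (β - (1+α)) := by
    intro s hs
    have hts : 0 < t - s := by linarith [hs.2]
    have hden : 0 < (t - s) ^ (1+α) := Real.rpow_pos_of_pos hts _
    have hb := hHolder s ⟨hs.1.le, hs.2.le⟩ t ⟨ht0.le, le_refl t⟩
    rw [abs_of_nonneg hts.le] at hb
    calc |f1 s| = |y t - y s| / (t - s) ^ (1+α) := by
          rw [hf1def, abs_div, abs_of_nonneg hden.le]
      _ ≤ (H * (t - s) ^ β) / (t - s) ^ (1+α) := by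
          gcongr
      _ = H * (t - s) ^ (β - (1+α)) := by
          rw [mul_div_assoc, ← Real.rpow_sub hts]
  have hb1int : IntervalIntegrable (fun s => H * (t - s) ^ (β - (1+α))) volume 0 t := by
    have h := (intervalIntegral.intervalIntegrable_rpow' (a := t) (b := 0)
      (show (-1:ℝ) < β - (1+α) by linarith)).comp_sub_left t
    simpa using h.const_mul H
  have hf1int : IntervalIntegrable f1 volume 0 t :=
    integrable_of_bound' ht0.le (hf1cont.aestronglyMeasurable measurableSet_Ioo) hb1int hf1bd
  -- a.e. strong measurability of g
  have hgaesm : AEStronglyMeasurable g (volume.restrict (Ioo 0 t)) := by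
    have h1 : AEStronglyMeasurable (fun s => linInterp τ y s / (t - s) ^ (1+α))
        (volume.restrict (Ioo 0 t)) :=
      ((linInterp_measurable τ y).div hdc.measurable).aestronglyMeasurable
    have h2 : ContinuousOn (fun s => y s / (t - s) ^ (1+α)) (Ioo 0 t) := by
      refine ContinuousOn.div (hycont.mono Ioo_subset_Icc_self) hdc.continuousOn
        fun s hs => (Real.rpow_pos_of_pos (by linarith [hs.2]) _).ne'
    refine ((h1.sub (h2.aestronglyMeasurable measurableSet_Ioo)).congr
      (Filter.Eventually.of_forall fun s => ?_))
    show linInterp τ y s / (t - s) ^ (1+α) - y s / (t - s) ^ (1+α) = g s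
    simp only [hgdef]
    rw [div_sub_div_same]
  -- piece 1: bound, integrability, value
  set ψ : ℝ → ℝ := fun s => H * (τ/2) ^ β * (t - s) ^ (-(1+α)) with hψdef
  have hg1bd : ∀ s ∈ Ioc 0 t', |g s| ≤ ψ s := by
    intro s hs
    have hts : 0 < t - s := by rw [ht'] at hs; linarith [hs.2]
    have hden : 0 < (t - s) ^ (1+α) := Real.rpow_pos_of_pos hts _
    have hmid := interp_bound_mid hH hβ0 hβ hτ hHolder hs.1 (show s ≤ (n:ℝ)*τ - τ from hs.2)
    calc |g s| = |linInterp τ y s - y s| / (t - s) ^ (1+α) := by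
          simp only [hgdef]; rw [abs_div, abs_of_nonneg hden.le]
      _ ≤ (H * (τ/2) ^ β) / (t - s) ^ (1+α) := by gcongr
      _ = ψ s := by
          simp only [hψdef]
          rw [div_eq_mul_inv, ← Real.rpow_neg hts.le]
  have hψint : IntervalIntegrable ψ volume 0 t' := by
    have h0 : (0:ℝ) ∉ uIcc t τ := notMem_uIcc_of_lt ht0 hτ
    have h := (intervalIntegral.intervalIntegrable_rpow (r := -(1+α)) (a := t) (b := τ)
      (Or.inr h0)).comp_sub_left t
    have h' := h.const_mul (H * (τ/2) ^ β)
    have e : t - t = 0 := sub_self t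
    rw [e] at h'
    exact h'
  have hg1int : IntervalIntegrable g volume 0 t' := by
    refine integrable_of_bound' ht'0
      (hgaesm.mono_measure (Measure.restrict_mono (Ioo_subset_Ioo le_rfl ht't) le_rfl))
      hψint fun s hs => hg1bd s ⟨hs.1, hs.2.le⟩
  have hψval : ∫ s in (0:ℝ)..t', ψ s = H * (τ/2) ^ β * ((τ ^ (-α) - t ^ (-α))/α) := by
    simp only [hψdef]
    rw [intervalIntegral.integral_const_mul,
      intervalIntegral.integral_comp_sub_left (fun u => u ^ (-(1+α))) t]
    have e : t - t' = τ := by rw [ht']; ring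
    have hr1 : (-(1+α) : ℝ) ≠ -1 := fun hc => hα.ne' (by linarith)
    have hr0 : (0:ℝ) ∉ uIcc τ t := notMem_uIcc_of_lt hτ ht0
    rw [e, sub_zero, integral_rpow (Or.inr ⟨hr1, hr0⟩)]
    have e2 : -(1+α) + 1 = -α := by ring
    rw [e2]
    congr 1
    rw [div_eq_div_iff (neg_ne_zero.mpr hα.ne') hα.ne']
    ring
  -- piece 2
  set G2 : ℝ → ℝ := fun s => H/τ * ((s - t') ^ ((2:ℝ)-1) * (τ - (s - t')) ^ ((β-α)-1))
      + H/τ * ((s - t') ^ ((1+β)-1) * (τ - (s - t')) ^ ((1-α)-1)) with hG2def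
  have e_add : τ + t' = t := by rw [ht']; ring
  have e_sub : t - t' = τ := by rw [ht']; ring
  have hg2bd : ∀ s ∈ Ioc t' t, |g s| ≤ G2 s := by
    intro s hs
    have hst' : 0 < s - t' := by linarith [hs.1]
    rcases eq_or_lt_of_le hs.2 with heq | hlt
    · have hgt : g s = 0 := by
        simp only [hgdef]
        rw [heq, hyt, sub_self, zero_div]
      have hG2nn : 0 ≤ G2 s := by
        have h2 : (0:ℝ) ≤ τ - (s - t') := by rw [ht'] at *; linarith [hs.2]
        simp only [hG2def]
        have hHτ : 0 ≤ H/τ := div_nonneg hH hτ.le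
        exact add_nonneg
          (mul_nonneg hHτ (mul_nonneg (Real.rpow_nonneg hst'.le _) (Real.rpow_nonneg h2 _)))
          (mul_nonneg hHτ (mul_nonneg (Real.rpow_nonneg hst'.le _) (Real.rpow_nonneg h2 _)))
      rw [hgt, abs_zero]
      exact hG2nn
    · have hts : 0 < t - s := by linarith
      have hden : 0 < (t - s) ^ (1+α) := Real.rpow_pos_of_pos hts _
      have hlast := interp_bound_last hH hβ0 hβ hτ hn hHolder
        (show (n:ℝ)*τ - τ < s from hs.1) (show s < (n:ℝ)*τ from hlt)
      have eτA : τ - (s - t') = t - s := by rw [ht']; ring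
      calc |g s| = |linInterp τ y s - y s| / (t - s) ^ (1+α) := by
            simp only [hgdef]; rw [abs_div, abs_of_nonneg hden.le]
        _ ≤ (H * ((s - t')/τ * (t - s) ^ β + (t - s)/τ * (s - t') ^ β)) / (t - s) ^ (1+α) := by
            gcongr
        _ = G2 s := by
            simp only [hG2def]
            rw [eτA, show ((2:ℝ)-1) = (1:ℝ) by norm_num, show ((1+β)-1 : ℝ) = β by ring,
              show ((β-α)-1 : ℝ) = β - (1+α) by ring, show ((1-α)-1 : ℝ) = 1-(1+α) by ring,
              Real.rpow_one, Real.rpow_sub hts, Real.rpow_sub hts, Real.rpow_one]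
            field_simp
  have hI2a : IntervalIntegrable
      (fun s => H/τ * ((s - t') ^ ((2:ℝ)-1) * (τ - (s - t')) ^ ((β-α)-1))) volume t' t := by
    have h1 := ((realBeta_scaled_integrable (show (0:ℝ) < 2 by norm_num)
      (show (0:ℝ) < β-α by linarith) hτ).comp_sub_right t').const_mul (H/τ)
    rw [zero_add, e_add] at h1
    exact h1
  have hI2b : IntervalIntegrable
      (fun s => H/τ * ((s - t') ^ ((1+β)-1) * (τ - (s - t')) ^ ((1-α)-1))) volume t' t := by
    have h2 := ((realBeta_scaled_integrable (show (0:ℝ) < 1+β by linarith)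
      (show (0:ℝ) < 1-α by linarith) hτ).comp_sub_right t').const_mul (H/τ)
    rw [zero_add, e_add] at h2
    exact h2
  have hG2int : IntervalIntegrable G2 volume t' t := hI2a.add hI2b
  have hg2int : IntervalIntegrable g volume t' t := by
    refine integrable_of_bound' ht't
      (hgaesm.mono_measure (Measure.restrict_mono (Ioo_subset_Ioo ht'0 le_rfl) le_rfl))
      hG2int fun s hs => hg2bd s ⟨hs.1, hs.2.le⟩
  have hG2val : ∫ s in t'..t, G2 s
      = H/τ * (τ ^ (2+(β-α)-1) * (Gamma 2 * Gamma (β-α) / Gamma (2+(β-α))))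
        + H/τ * (τ ^ ((1+β)+(1-α)-1) * (Gamma (1+β) * Gamma (1-α) / Gamma ((1+β)+(1-α)))) := by
    simp only [hG2def]
    rw [intervalIntegral.integral_add hI2a hI2b,
      intervalIntegral.integral_const_mul, intervalIntegral.integral_const_mul,
      intervalIntegral.integral_comp_sub_right
        (fun u => u ^ ((2:ℝ)-1) * (τ - u) ^ ((β-α)-1)) t',
      intervalIntegral.integral_comp_sub_right
        (fun u => u ^ ((1+β)-1) * (τ - u) ^ ((1-α)-1)) t',
      sub_self, e_sub,
      realBeta_scaled_value (show (0:ℝ) < 2 by norm_num) (show (0:ℝ) < β-α by linarith) hτ,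
      realBeta_scaled_value (show (0:ℝ) < 1+β by linarith) (show (0:ℝ) < 1-α by linarith) hτ]
  -- total integrability and key identity
  have hgint : IntervalIntegrable g volume 0 t := hg1int.trans hg2int
  have key : caputo α y t - caputo α (linInterp τ y) t
      = (α / Gamma (1-α)) * ∫ s in (0:ℝ)..t, g s := by
    show (1 / Gamma (1 - α)) * (y t - y 0) / t ^ α
        + (α / Gamma (1 - α)) * (∫ s in (0:ℝ)..t, (y t - y s) / (t - s) ^ (1 + α))
        - ((1 / Gamma (1 - α)) * (linInterp τ y t - linInterp τ y 0) / t ^ α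
          + (α / Gamma (1 - α)) *
            ∫ s in (0:ℝ)..t, (linInterp τ y t - linInterp τ y s) / (t - s) ^ (1 + α))
        = (α / Gamma (1-α)) * ∫ s in (0:ℝ)..t, g s
    rw [hyt, hy0]
    have hsplit : ∫ s in (0:ℝ)..t, (y t - linInterp τ y s) / (t - s) ^ (1 + α)
        = (∫ s in (0:ℝ)..t, f1 s) - ∫ s in (0:ℝ)..t, g s := by
      rw [← intervalIntegral.integral_sub hf1int hgint]
      refine intervalIntegral.integral_congr fun s hs => ?_
      simp only [hf1def, hgdef]
      rw [div_sub_div_same]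
      congr 1
      ring
    rw [hsplit]
    have hid : ∫ s in (0:ℝ)..t, (y t - y s) / (t - s) ^ (1 + α) = ∫ s in (0:ℝ)..t, f1 s := rfl
    rw [hid]
    ring
  rw [key]
  have hsplit2 : ∫ s in (0:ℝ)..t, g s = (∫ s in (0:ℝ)..t', g s) + ∫ s in t'..t, g s :=
    (intervalIntegral.integral_add_adjacent_intervals hg1int hg2int).symm
  have hb1 : ‖∫ s in (0:ℝ)..t', g s‖ ≤ |∫ s in (0:ℝ)..t', ψ s| := by
    refine intervalIntegral.norm_integral_le_abs_of_norm_le ?_ hψint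
    refine (ae_restrict_iff' measurableSet_uIoc).mpr (Filter.Eventually.of_forall fun s hs => ?_)
    rw [uIoc_of_le ht'0] at hs
    rw [Real.norm_eq_abs]
    exact hg1bd s hs
  have hb2 : ‖∫ s in t'..t, g s‖ ≤ |∫ s in t'..t, G2 s| := by
    refine intervalIntegral.norm_integral_le_abs_of_norm_le ?_ hG2int
    refine (ae_restrict_iff' measurableSet_uIoc).mpr (Filter.Eventually.of_forall fun s hs => ?_)
    rw [uIoc_of_le ht't] at hs
    rw [Real.norm_eq_abs]
    exact hg2bd s hs
  -- Gamma positivity facts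
  have hΓβα : 0 < Gamma (β-α) := Real.Gamma_pos_of_pos (by linarith)
  have hΓ2βα : 0 < Gamma (2+(β-α)) := Real.Gamma_pos_of_pos (by linarith)
  have hΓ1β : 0 < Gamma (1+β) := Real.Gamma_pos_of_pos (by linarith)
  have hΓ1α : 0 < Gamma (1-α) := hG
  have hΓ1β1α : 0 < Gamma ((1+β)+(1-α)) := Real.Gamma_pos_of_pos (by linarith)
  have hΓtwo : 0 < Gamma 2 := Real.Gamma_pos_of_pos (by norm_num)
  have hψabs : |∫ s in (0:ℝ)..t', ψ s| = H * (τ/2) ^ β * ((τ ^ (-α) - t ^ (-α))/α) := by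
    rw [hψval]
    refine abs_of_nonneg ?_
    have hmono : t ^ (-α) ≤ τ ^ (-α) :=
      Real.rpow_le_rpow_of_nonpos hτ htτ (neg_nonpos.mpr hα.le)
    have h1 : (0:ℝ) ≤ (τ/2) ^ β := Real.rpow_nonneg (by positivity) _
    have h2 : (0:ℝ) ≤ (τ ^ (-α) - t ^ (-α))/α := div_nonneg (by linarith) hα.le
    positivity
  have hG2abs : |∫ s in t'..t, G2 s|
      = H/τ * (τ ^ (2+(β-α)-1) * (Gamma 2 * Gamma (β-α) / Gamma (2+(β-α))))
        + H/τ * (τ ^ ((1+β)+(1-α)-1) * (Gamma (1+β) * Gamma (1-α) / Gamma ((1+β)+(1-α)))) := by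
    rw [hG2val]
    refine abs_of_nonneg ?_
    have hHτ : 0 ≤ H/τ := div_nonneg hH hτ.le
    have k1 : (0:ℝ) ≤ τ ^ (2+(β-α)-1) := Real.rpow_nonneg hτ.le _
    have k2 : (0:ℝ) ≤ τ ^ ((1+β)+(1-α)-1) := Real.rpow_nonneg hτ.le _
    have k3 : (0:ℝ) ≤ Gamma 2 * Gamma (β-α) / Gamma (2+(β-α)) := by positivity
    have k4 : (0:ℝ) ≤ Gamma (1+β) * Gamma (1-α) / Gamma ((1+β)+(1-α)) := by positivity
    have := mul_nonneg hHτ (mul_nonneg k1 k3)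
    have := mul_nonneg hHτ (mul_nonneg k2 k4)
    linarith
  have habs : |(α / Gamma (1-α)) * ∫ s in (0:ℝ)..t, g s|
      ≤ (α / Gamma (1-α)) *
        (H * (τ/2) ^ β * ((τ ^ (-α) - t ^ (-α))/α)
         + (H/τ * (τ ^ (2+(β-α)-1) * (Gamma 2 * Gamma (β-α) / Gamma (2+(β-α))))
            + H/τ * (τ ^ ((1+β)+(1-α)-1)
                * (Gamma (1+β) * Gamma (1-α) / Gamma ((1+β)+(1-α)))))) := by
    rw [abs_mul, abs_of_nonneg (div_nonneg hα.le hG.le)]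
    refine mul_le_mul_of_nonneg_left ?_ (div_nonneg hα.le hG.le)
    rw [hsplit2, ← hψabs, ← hG2abs]
    rw [Real.norm_eq_abs] at hb1 hb2
    calc |(∫ s in (0:ℝ)..t', g s) + ∫ s in t'..t, g s|
        ≤ |∫ s in (0:ℝ)..t', g s| + |∫ s in t'..t, g s| := abs_add_le _ _
      _ ≤ _ := add_le_add hb1 hb2
  refine habs.trans (le_of_eq ?_)
  -- final algebra
  have htn : t ^ (-α) = (n:ℝ) ^ (-α) * τ ^ (-α) := by
    rw [ht, Real.mul_rpow (by positivity) hτ.le]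
  have hhalf : ((τ/2) : ℝ) ^ β = τ ^ β / 2 ^ β := Real.div_rpow hτ.le (by norm_num : (0:ℝ) ≤ 2) β
  have hE4 : τ ^ (2+(β-α)-1) = τ * τ ^ (β-α) := by
    rw [show (2+(β-α)-1 : ℝ) = 1+(β-α) by ring, Real.rpow_add hτ, Real.rpow_one]
  have hE5 : τ ^ ((1+β)+(1-α)-1) = τ * τ ^ (β-α) := by
    rw [show ((1+β)+(1-α)-1 : ℝ) = 1+(β-α) by ring, Real.rpow_add hτ, Real.rpow_one]
  have hΓrec : Gamma (2+(β-α)) = ((β-α)+1)*((β-α)*Gamma (β-α)) := by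
    rw [show (2+(β-α) : ℝ) = ((β-α)+1)+1 by ring,
      Real.Gamma_add_one (show ((β-α)+1 : ℝ) ≠ 0 from (by linarith : (0:ℝ) < (β-α)+1).ne')]
    rw [Real.Gamma_add_one (show (β-α : ℝ) ≠ 0 from (by linarith : (0:ℝ) < β-α).ne')]
  rw [htn, hhalf, hE4, hE5, Real.Gamma_two, hΓrec,
    show ((1+β)+(1-α) : ℝ) = 2+β-α by ring]
  have hBQ : τ ^ β * τ ^ (-α) = τ ^ (β-α) := by
    rw [← Real.rpow_add hτ]; ring_nf
  have h2β : (0:ℝ) < 2 ^ β := Real.rpow_pos_of_pos (by norm_num) β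
  rw [← hBQ]
  exact final_algebra hα.ne' hτ.ne' hG.ne' hΓβα.ne' (Real.Gamma_pos_of_pos (by linarith) :
      (0:ℝ) < Gamma (2+β-α)).ne' h2β.ne' (by linarith : (0:ℝ) < β - α).ne'
    (by linarith : (0:ℝ) < (β-α)+1).ne' (by linarith : (0:ℝ) < 1+β-α).ne' rfl
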